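/- The PDHG operator with step-size η < 1/‖A‖₂ is firmly non-expansive with respect to the seminorm ‖·‖_P: for all u, v ∈ ℝⁿ × ℝᵐ, ‖PDHG(u) − PDHG(v)‖_P² ≤ ‖u − v‖_P² − ‖(PDHG(u) − u) − (PDHG(v) − v)‖_P². -/
import Mathlib


open Matrix
open scoped BigOperators

noncomputable section

/-- Euclidean norm of a vector in `ℝᵏ`. -/
def nrm {k : ℕ} (v : Fin k → ℝ) : ℝ := Real.sqrt (v ⬝ᵥ v)

/-- Euclidean norm of a primal-dual pair `z = (x, y) ∈ ℝⁿ × ℝᵐ`. -/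
def nrmP {n m : ℕ} (z : (Fin n → ℝ) × (Fin m → ℝ)) : ℝ :=
  Real.sqrt (z.1 ⬝ᵥ z.1 + z.2 ⬝ᵥ z.2)

/-- Spectral norm `‖A‖₂` of a matrix: the supremum of `‖Ax‖₂` over unit vectors `x`. -/
def specNorm {n m : ℕ} (A : Matrix (Fin m) (Fin n) ℝ) : ℝ :=
  sSup {r | ∃ x : Fin n → ℝ, nrm x = 1 ∧ r = nrm (A *ᵥ x)}

/-- Componentwise positive part `[v]⁺`. -/
def posPt {k : ℕ} (v : Fin k → ℝ) : Fin k → ℝ := fun i => max (v i) 0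

/-- The Lagrangian `L(x,y) = cᵀx − yᵀAx + bᵀy` of the standard-form LP. -/
def Lag {n m : ℕ} (A : Matrix (Fin m) (Fin n) ℝ) (b : Fin m → ℝ) (c : Fin n → ℝ)
    (x : Fin n → ℝ) (y : Fin m → ℝ) : ℝ :=
  c ⬝ᵥ x - y ⬝ᵥ (A *ᵥ x) + b ⬝ᵥ y

/-- One PDHG iteration with (equal) step-size `η`:
`x⁺ = proj_{ℝ₊ⁿ}(x + ηAᵀy − ηc)`, `y⁺ = y − ηA(2x⁺ − x) + ηb`. -/
def pdhgStep {n m : ℕ} (A : Matrix (Fin m) (Fin n) ℝ) (b : Fin m → ℝ) (c : Fin n → ℝ)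
    (η : ℝ) (z : (Fin n → ℝ) × (Fin m → ℝ)) : (Fin n → ℝ) × (Fin m → ℝ) :=
  let x' := posPt (z.1 + η • (Aᵀ *ᵥ z.2) - η • c)
  (x', z.2 - η • (A *ᵥ ((2 : ℝ) • x' - z.1)) + η • b)

/-- Quadratic form `wᵀPw` of `P = [[(1/η)Iₙ, Aᵀ], [A, (1/η)Iₘ]]`. -/
def Pquad {n m : ℕ} (A : Matrix (Fin m) (Fin n) ℝ) (η : ℝ)
    (w : (Fin n → ℝ) × (Fin m → ℝ)) : ℝ :=
  (1 / η) * (w.1 ⬝ᵥ w.1) + 2 * (w.2 ⬝ᵥ (A *ᵥ w.1)) + (1 / η) * (w.2 ⬝ᵥ w.2)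

/-- The seminorm `‖w‖_P = √(wᵀPw)`. -/
def Pnorm {n m : ℕ} (A : Matrix (Fin m) (Fin n) ℝ) (η : ℝ)
    (w : (Fin n → ℝ) × (Fin m → ℝ)) : ℝ := Real.sqrt (Pquad A η w)

/-- `σ_max(P)`: the largest eigenvalue of the symmetric matrix `P`, i.e. the
supremum of the Rayleigh quotient `wᵀPw` over unit vectors `w`. -/
def sigmaMaxP {n m : ℕ} (A : Matrix (Fin m) (Fin n) ℝ) (η : ℝ) : ℝ :=
  sSup {r | ∃ w : (Fin n → ℝ) × (Fin m → ℝ), nrmP w = 1 ∧ r = Pquad A η w}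

/-- Application of the matrix `P`: `Pw = ((1/η)w₁ + Aᵀw₂, Aw₁ + (1/η)w₂)`. -/
def Papply {n m : ℕ} (A : Matrix (Fin m) (Fin n) ℝ) (η : ℝ)
    (w : (Fin n → ℝ) × (Fin m → ℝ)) : (Fin n → ℝ) × (Fin m → ℝ) :=
  ((1 / η) • w.1 + Aᵀ *ᵥ w.2, A *ᵥ w.1 + (1 / η) • w.2)

/-- The set `Z*` of saddle points of `L` over `Z = ℝ₊ⁿ × ℝᵐ`:
`L(x*, y) ≤ L(x*, y*) ≤ L(x, y*)` for all `(x, y) ∈ Z`. -/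
def saddleSet {n m : ℕ} (A : Matrix (Fin m) (Fin n) ℝ) (b : Fin m → ℝ) (c : Fin n → ℝ) :
    Set ((Fin n → ℝ) × (Fin m → ℝ)) :=
  {z | (∀ i, 0 ≤ z.1 i) ∧
    (∀ y : Fin m → ℝ, Lag A b c z.1 y ≤ Lag A b c z.1 z.2) ∧
    (∀ x : Fin n → ℝ, (∀ i, 0 ≤ x i) → Lag A b c z.1 z.2 ≤ Lag A b c x z.2)}

/-- Euclidean distance `dist₂(z, S)` from `z` to a set `S`. -/
def dist2 {n m : ℕ} (z : (Fin n → ℝ) × (Fin m → ℝ))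
    (S : Set ((Fin n → ℝ) × (Fin m → ℝ))) : ℝ :=
  sInf ((fun w => nrmP (z - w)) '' S)

/-- `P`-seminorm distance `dist_P(z, S)` from `z` to a set `S`. -/
def distP {n m : ℕ} (A : Matrix (Fin m) (Fin n) ℝ) (η : ℝ)
    (z : (Fin n → ℝ) × (Fin m → ℝ)) (S : Set ((Fin n → ℝ) × (Fin m → ℝ))) : ℝ :=
  sInf ((fun w => Pnorm A η (z - w)) '' S)

/-- KKT error `KKT(z) = ‖(Ax − b, [Aᵀy − c]⁺, [cᵀx − bᵀy]⁺)‖₂`. -/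
def KKTerr {n m : ℕ} (A : Matrix (Fin m) (Fin n) ℝ) (b : Fin m → ℝ) (c : Fin n → ℝ)
    (z : (Fin n → ℝ) × (Fin m → ℝ)) : ℝ :=
  Real.sqrt ((A *ᵥ z.1 - b) ⬝ᵥ (A *ᵥ z.1 - b)
    + posPt (Aᵀ *ᵥ z.2 - c) ⬝ᵥ posPt (Aᵀ *ᵥ z.2 - c)
    + (max (c ⬝ᵥ z.1 - b ⬝ᵥ z.2) 0) ^ 2)

/-- Normalized duality gap `ρ_r(z) = sup_{ẑ ∈ W_r(z)} (L(x, ŷ) − L(x̂, y)) / r`,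
where `W_r(z) = {ẑ ∈ Z : ‖z − ẑ‖₂ ≤ r}`. -/
def rhoGap {n m : ℕ} (A : Matrix (Fin m) (Fin n) ℝ) (b : Fin m → ℝ) (c : Fin n → ℝ)
    (r : ℝ) (z : (Fin n → ℝ) × (Fin m → ℝ)) : ℝ :=
  sSup {g | ∃ w : (Fin n → ℝ) × (Fin m → ℝ), (∀ i, 0 ≤ w.1 i) ∧ nrmP (z - w) ≤ r ∧
    g = (Lag A b c z.1 w.2 - Lag A b c w.1 z.2) / r}

/-- The subdifferential operator
`F(z) = {(c − Aᵀy + g, Ax − b) : g ∈ N_{ℝ₊ⁿ}(x)}`, where `N_{ℝ₊ⁿ}(x)` is the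
normal cone of `ℝ₊ⁿ` at `x ∈ ℝ₊ⁿ` (the set is empty if `x ∉ ℝ₊ⁿ`). -/
def Fop {n m : ℕ} (A : Matrix (Fin m) (Fin n) ℝ) (b : Fin m → ℝ) (c : Fin n → ℝ)
    (z : (Fin n → ℝ) × (Fin m → ℝ)) : Set ((Fin n → ℝ) × (Fin m → ℝ)) :=
  {w | (∀ i, 0 ≤ z.1 i) ∧ ∃ g : Fin n → ℝ,
    (∀ u : Fin n → ℝ, (∀ i, 0 ≤ u i) → g ⬝ᵥ (u - z.1) ≤ 0) ∧
    w = (c - Aᵀ *ᵥ z.2 + g, A *ᵥ z.1 - b)}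

/-- `dist₂(0, F(z)) = inf {‖w‖₂ : w ∈ F(z)}`. -/
def distF {n m : ℕ} (A : Matrix (Fin m) (Fin n) ℝ) (b : Fin m → ℝ) (c : Fin n → ℝ)
    (z : (Fin n → ℝ) × (Fin m → ℝ)) : ℝ :=
  sInf (nrmP '' Fop A b c z)

end


noncomputable section
namespace S7
lemma dot_nonneg {k : ℕ} (v : Fin k → ℝ) : 0 ≤ v ⬝ᵥ v :=
  Finset.sum_nonneg fun i _ => mul_self_nonneg _

lemma nrm_nonneg {k : ℕ} (v : Fin k → ℝ) : 0 ≤ nrm v := Real.sqrt_nonneg _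

lemma nrm_sq {k : ℕ} (v : Fin k → ℝ) : nrm v ^ 2 = v ⬝ᵥ v := by
  rw [nrm, Real.sq_sqrt (dot_nonneg v)]

lemma abs_dot_le {k : ℕ} (a b : Fin k → ℝ) : a ⬝ᵥ b ≤ nrm a * nrm b := by
  have h := Finset.sum_mul_sq_le_sq_mul_sq Finset.univ a b
  have h2 : (a ⬝ᵥ b)^2 ≤ (nrm a * nrm b)^2 := by
    rw [mul_pow, nrm_sq, nrm_sq]
    simpa [dotProduct, pow_two] using h
  have h3 : |a ⬝ᵥ b| ^ 2 ≤ (nrm a * nrm b) ^ 2 := by rwa [sq_abs]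
  have h4 := le_of_pow_le_pow_left₀ two_ne_zero (mul_nonneg (nrm_nonneg a) (nrm_nonneg b)) h3
  exact le_trans (le_abs_self _) h4
end S7

namespace S7
lemma nrm_smul {k : ℕ} (r : ℝ) (v : Fin k → ℝ) : nrm (r • v) = |r| * nrm v := by
  rw [nrm, nrm, smul_dotProduct, dotProduct_smul, smul_eq_mul, smul_eq_mul, ← mul_assoc,
    Real.sqrt_mul (mul_self_nonneg r), Real.sqrt_mul_self_eq_abs r]

lemma nrm_mulVec_le {n m : ℕ} (A : Matrix (Fin m) (Fin n) ℝ) (x : Fin n → ℝ) :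
    nrm (A *ᵥ x) ≤ Real.sqrt (∑ i, ∑ j, A i j ^ 2) * nrm x := by
  rw [nrm, nrm, ← Real.sqrt_mul (by positivity)]
  apply Real.sqrt_le_sqrt
  have key : ∀ i, (A *ᵥ x) i * (A *ᵥ x) i ≤ (∑ j, A i j ^ 2) * (x ⬝ᵥ x) := by
    intro i
    have := Finset.sum_mul_sq_le_sq_mul_sq Finset.univ (A i) x
    simpa [Matrix.mulVec, dotProduct, pow_two] using this
  calc (A *ᵥ x) ⬝ᵥ (A *ᵥ x) = ∑ i, (A *ᵥ x) i * (A *ᵥ x) i := rfl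
    _ ≤ ∑ i, (∑ j, A i j ^ 2) * (x ⬝ᵥ x) := Finset.sum_le_sum fun i _ => key i
    _ = (∑ i, ∑ j, A i j ^ 2) * (x ⬝ᵥ x) := by rw [Finset.sum_mul]

lemma specNorm_bound {n m : ℕ} (A : Matrix (Fin m) (Fin n) ℝ) (x : Fin n → ℝ) :
    nrm (A *ᵥ x) ≤ specNorm A * nrm x := by
  have hbdd : BddAbove {r | ∃ x : Fin n → ℝ, nrm x = 1 ∧ r = nrm (A *ᵥ x)} := by
    refine ⟨Real.sqrt (∑ i, ∑ j, A i j ^ 2), ?_⟩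
    rintro r ⟨y, hy, rfl⟩
    simpa [hy] using nrm_mulVec_le A y
  by_cases hx : nrm x = 0
  · have hx0 : x = 0 := by
      have h0 : x ⬝ᵥ x = 0 := by
        have := Real.sqrt_eq_zero (dot_nonneg x) |>.mp hx
        exact this
      funext i
      have : ∀ j ∈ Finset.univ, x j * x j = 0 :=
        (Finset.sum_eq_zero_iff_of_nonneg (fun j _ => mul_self_nonneg _)).mp h0
      have := mul_self_eq_zero.mp (this i (Finset.mem_univ i))
      simpa using this
    simp [hx0, nrm, Matrix.mulVec_zero, dotProduct]
  · have hxpos : 0 < nrm x := lt_of_le_of_ne (nrm_nonneg x) (Ne.symm hx)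
    have hmem : nrm (A *ᵥ ((nrm x)⁻¹ • x)) ∈
        {r | ∃ y : Fin n → ℝ, nrm y = 1 ∧ r = nrm (A *ᵥ y)} := by
      refine ⟨(nrm x)⁻¹ • x, ?_, rfl⟩
      rw [nrm_smul, abs_of_pos (inv_pos.mpr hxpos), inv_mul_cancel₀ hx]
    have hle : nrm (A *ᵥ ((nrm x)⁻¹ • x)) ≤ specNorm A := le_csSup hbdd hmem
    rw [Matrix.mulVec_smul, nrm_smul, abs_of_pos (inv_pos.mpr hxpos)] at hle
    calc nrm (A *ᵥ x) = (nrm x)⁻¹ * nrm (A *ᵥ x) * nrm x := by field_simp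
      _ ≤ specNorm A * nrm x := by
          exact mul_le_mul_of_nonneg_right hle (nrm_nonneg x)
end S7

namespace S7
lemma specNorm_nonneg {n m : ℕ} (A : Matrix (Fin m) (Fin n) ℝ) : 0 ≤ specNorm A := by
  rcases Set.eq_empty_or_nonempty {r | ∃ x : Fin n → ℝ, nrm x = 1 ∧ r = nrm (A *ᵥ x)} with he | ⟨r, hr⟩
  · rw [specNorm, he, Real.sSup_empty]
  · have hbdd : BddAbove {r | ∃ x : Fin n → ℝ, nrm x = 1 ∧ r = nrm (A *ᵥ x)} := by
      refine ⟨Real.sqrt (∑ i, ∑ j, A i j ^ 2), ?_⟩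
      rintro s ⟨y, hy, rfl⟩
      simpa [hy] using nrm_mulVec_le A y
    obtain ⟨x, hx, rfl⟩ := hr
    exact le_trans (nrm_nonneg _) (le_csSup hbdd ⟨x, hx, rfl⟩)

lemma pquad_nonneg {n m : ℕ} (A : Matrix (Fin m) (Fin n) ℝ) (η : ℝ) (hη : 0 < η)
    (hs : specNorm A < 1 / η) (w : (Fin n → ℝ) × (Fin m → ℝ)) : 0 ≤ Pquad A η w := by
  have h1 : w.2 ⬝ᵥ (A *ᵥ w.1) ≥ -(nrm w.2 * nrm (A *ᵥ w.1)) := by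
    have := abs_dot_le w.2 (-(A *ᵥ w.1))
    rw [dotProduct_neg] at this
    have h2 : nrm (-(A *ᵥ w.1)) = nrm (A *ᵥ w.1) := by
      rw [nrm, nrm, neg_dotProduct, dotProduct_neg, neg_neg]
    linarith [this, h2 ▸ this]
  have h2 : nrm (A *ᵥ w.1) ≤ specNorm A * nrm w.1 := specNorm_bound A w.1
  have hs0 : 0 ≤ specNorm A := specNorm_nonneg A
  have h3 : nrm w.2 * nrm (A *ᵥ w.1) ≤ specNorm A * (nrm w.1 * nrm w.2) := by
    nlinarith [nrm_nonneg w.2, nrm_nonneg w.1]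
  have h4 : 2 * (nrm w.1 * nrm w.2) ≤ nrm w.1 ^ 2 + nrm w.2 ^ 2 := by nlinarith [sq_nonneg (nrm w.1 - nrm w.2)]
  have e1 : nrm w.1 ^ 2 = w.1 ⬝ᵥ w.1 := nrm_sq w.1
  have e2 : nrm w.2 ^ 2 = w.2 ⬝ᵥ w.2 := nrm_sq w.2
  rw [Pquad]
  nlinarith [nrm_nonneg w.1, nrm_nonneg w.2, mul_pos hη (sub_pos.mpr hs),
    sq_nonneg (nrm w.1 - nrm w.2), sq_nonneg (nrm w.1 + nrm w.2)]

lemma proj_ineq {k : ℕ} (v w : Fin k → ℝ) (hw : ∀ i, 0 ≤ w i) :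
    (v - posPt v) ⬝ᵥ (w - posPt v) ≤ 0 := by
  apply Finset.sum_nonpos
  intro i _
  simp only [Pi.sub_apply, posPt]
  rcases le_or_gt 0 (v i) with h | h
  · rw [max_eq_left h]; simp
  · rw [max_eq_right h.le]
    simp only [sub_zero]
    exact mul_nonpos_of_nonpos_of_nonneg h.le (hw i)
end S7

noncomputable section

namespace S7
lemma transDot {n m : ℕ} (A : Matrix (Fin m) (Fin n) ℝ) (y : Fin m → ℝ) (x : Fin n → ℝ) :
    (Aᵀ *ᵥ y) ⬝ᵥ x = y ⬝ᵥ (A *ᵥ x) := by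
  rw [Matrix.mulVec_transpose, ← Matrix.dotProduct_mulVec]
end S7

lemma S7hE {n m : ℕ} (A : Matrix (Fin m) (Fin n) ℝ) (η : ℝ) (hη : η ≠ 0)
    (X X' : Fin n → ℝ) (Y : Fin m → ℝ) :
    Pquad A η (X, Y) - Pquad A η (X' - X, -(η • (A *ᵥ ((2:ℝ) • X' - X))))
      - Pquad A η (X', Y - η • (A *ᵥ ((2:ℝ) • X' - X)))
    = (2 / η) * (X ⬝ᵥ X' + η * (Y ⬝ᵥ (A *ᵥ X')) - X' ⬝ᵥ X') := by
  simp only [Pquad, Matrix.mulVec_sub, Matrix.mulVec_smul,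
    dotProduct_sub, sub_dotProduct, dotProduct_add, add_dotProduct,
    dotProduct_smul, smul_dotProduct, smul_eq_mul, neg_dotProduct, dotProduct_neg]
  rw [dotProduct_comm X' X, dotProduct_comm (A *ᵥ X') Y, dotProduct_comm (A *ᵥ X) Y,
    dotProduct_comm (A *ᵥ X) (A *ᵥ X')]
  field_simp
  ring

theorem stmt7 {n m : ℕ} (A : Matrix (Fin m) (Fin n) ℝ) (b : Fin m → ℝ) (c : Fin n → ℝ)
    (η : ℝ) (hη0 : 0 < η) (hη : η < 1 / specNorm A) :
    ∀ u v : (Fin n → ℝ) × (Fin m → ℝ),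
      (Pnorm A η (pdhgStep A b c η u - pdhgStep A b c η v)) ^ 2 ≤
        (Pnorm A η (u - v)) ^ 2 -
          (Pnorm A η ((pdhgStep A b c η u - u) - (pdhgStep A b c η v - v))) ^ 2 := by
  -- spectral norm positivity and the flipped bound
  have hs0 : 0 < specNorm A := by
    rcases lt_or_eq_of_le (S7.specNorm_nonneg A) with h | h
    · exact h
    · exfalso; rw [← h] at hη; simp at hη; linarith
  have hs : specNorm A < 1 / η := by
    rw [lt_div_iff₀ hs0] at hη
    rw [lt_div_iff₀ hη0]
    linarith [hη, mul_comm η (specNorm A)]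
  intro u v
  obtain ⟨x1, y1⟩ := u
  obtain ⟨x2, y2⟩ := v
  set p := x1 + η • (Aᵀ *ᵥ y1) - η • c with hp
  set q := x2 + η • (Aᵀ *ᵥ y2) - η • c with hq
  set x1' := posPt p with hx1'
  set x2' := posPt q with hx2'
  -- projection inequalities
  have h1 : (p - x1') ⬝ᵥ (x2' - x1') ≤ 0 := S7.proj_ineq p x2' (fun i => le_max_right _ _)
  have h2 : (q - x2') ⬝ᵥ (x1' - x2') ≤ 0 := S7.proj_ineq q x1' (fun i => le_max_right _ _)
  -- key inequality
  have hI : 0 ≤ (x1 - x2) ⬝ᵥ (x1' - x2') + η * ((y1 - y2) ⬝ᵥ (A *ᵥ (x1' - x2')))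
      - (x1' - x2') ⬝ᵥ (x1' - x2') := by
    have hpq : (p - q) = (x1 - x2) + η • (Aᵀ *ᵥ (y1 - y2)) := by
      rw [hp, hq, Matrix.mulVec_sub]
      module
    have hsum : ((p - q) - (x1' - x2')) ⬝ᵥ (x1' - x2') ≥ 0 := by
      have e1 : (p - x1') ⬝ᵥ (x2' - x1') = -((p - x1') ⬝ᵥ (x1' - x2')) := by
        rw [← dotProduct_neg]; congr 1; module
      rw [e1] at h1
      have h1' : 0 ≤ (p - x1') ⬝ᵥ (x1' - x2') := by linarith
      have : ((p - q) - (x1' - x2')) ⬝ᵥ (x1' - x2')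
          = (p - x1') ⬝ᵥ (x1' - x2') - (q - x2') ⬝ᵥ (x1' - x2') := by
        rw [← sub_dotProduct]; congr 1; module
      rw [this]; linarith
    rw [hpq] at hsum
    rw [add_sub_right_comm, add_dotProduct, smul_dotProduct, S7.transDot, smul_eq_mul,
      sub_dotProduct] at hsum
    linarith
  -- rewrite Pnorm squares as Pquad
  have e1 := Real.sq_sqrt (S7.pquad_nonneg A η hη0 hs
    (pdhgStep A b c η (x1, y1) - pdhgStep A b c η (x2, y2)))
  have e2 := Real.sq_sqrt (S7.pquad_nonneg A η hη0 hs ((x1, y1) - (x2, y2)))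
  have e3 := Real.sq_sqrt (S7.pquad_nonneg A η hη0 hs
    ((pdhgStep A b c η (x1, y1) - (x1, y1)) - (pdhgStep A b c η (x2, y2) - (x2, y2))))
  rw [Pnorm, Pnorm, Pnorm, e1, e2, e3]
  -- convert the pdhg step differences to canonical form
  have hstep1 : pdhgStep A b c η (x1, y1)
      = (x1', y1 - η • (A *ᵥ ((2:ℝ) • x1' - x1)) + η • b) := rfl
  have hstep2 : pdhgStep A b c η (x2, y2)
      = (x2', y2 - η • (A *ᵥ ((2:ℝ) • x2' - x2)) + η • b) := rfl
  have E1 : pdhgStep A b c η (x1, y1) - pdhgStep A b c η (x2, y2)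
      = (x1' - x2', (y1 - y2) - η • (A *ᵥ ((2:ℝ) • (x1' - x2') - (x1 - x2)))) := by
    rw [hstep1, hstep2, Prod.mk_sub_mk]
    refine Prod.ext ?_ ?_ <;> dsimp only <;>
      (try simp only [Matrix.mulVec_sub, Matrix.mulVec_smul]) <;> module
  have E2 : (pdhgStep A b c η (x1, y1) - (x1, y1)) - (pdhgStep A b c η (x2, y2) - (x2, y2))
      = ((x1' - x2') - (x1 - x2), -(η • (A *ᵥ ((2:ℝ) • (x1' - x2') - (x1 - x2))))) := by
    rw [hstep1, hstep2, Prod.mk_sub_mk, Prod.mk_sub_mk, Prod.mk_sub_mk]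
    refine Prod.ext ?_ ?_ <;> dsimp only <;>
      (try simp only [Matrix.mulVec_sub, Matrix.mulVec_smul]) <;> module
  have E3 : ((x1, y1) : (Fin n → ℝ) × (Fin m → ℝ)) - (x2, y2) = (x1 - x2, y1 - y2) :=
    Prod.mk_sub_mk _ _ _ _
  rw [E1, E2, E3] at *
  have hE := S7hE A η (ne_of_gt hη0) (x1 - x2) (x1' - x2') (y1 - y2)
  have hfin : 0 ≤ (2 / η) * ((x1 - x2) ⬝ᵥ (x1' - x2') + η * ((y1 - y2) ⬝ᵥ (A *ᵥ (x1' - x2')))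
      - (x1' - x2') ⬝ᵥ (x1' - x2')) :=
    mul_nonneg (by positivity) hI
  linarith

end
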